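/- Let f : ℝ → ℝ be continuously differentiable on an open interval (a, b). Suppose x₁ < x₂ are points in (a, b) with f(x₁) = f(x₂) and f'(x₁)·f'(x₂) > 0. Then there exists x₀ ∈ (x₁, x₂) such that f(x₀) = f(x₁) and f'(x₀)·f'(x₁) ≤ 0. -/

import Mathlib

open Set Filter Topology

lemma aux2 (f f' : ℝ → ℝ) (x₁ x₂ : ℝ)
    (hderiv : ∀ x ∈ Set.Icc x₁ x₂, HasDerivAt f (f' x) x)
    (hlt : x₁ < x₂) (heq : f x₁ = f x₂)
    (h1 : 0 < f' x₁) (h2 : 0 < f' x₂) :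
    ∃ x₀ ∈ Set.Ioo x₁ x₂, f x₀ = f x₁ ∧ f' x₀ ≤ 0 := by
  have hcf : ContinuousOn f (Icc x₁ x₂) := fun x hx =>
    (hderiv x hx).continuousAt.continuousWithinAt
  -- f x > f x₁ just to the right of x₁
  have hslope1 : Tendsto (slope f x₁) (𝓝[≠] x₁) (𝓝 (f' x₁)) :=
    hasDerivAt_iff_tendsto_slope.mp (hderiv x₁ ⟨le_refl _, hlt.le⟩)
  have hev : ∀ᶠ x in 𝓝[>] x₁, f x₁ < f x := by
    have hpos : ∀ᶠ x in 𝓝[≠] x₁, 0 < slope f x₁ x :=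
      hslope1.eventually (eventually_gt_nhds h1)
    have hpos' := hpos.filter_mono (nhdsWithin_mono x₁ (fun x hx => ne_of_gt hx))
    filter_upwards [hpos', self_mem_nhdsWithin] with x hx hx'
    have hd : 0 < (f x - f x₁) / (x - x₁) := by
      simpa [slope_def_field] using hx
    have hxx : 0 < x - x₁ := sub_pos.mpr hx'
    nlinarith [mul_pos hd hxx, div_mul_cancel₀ (f x - f x₁) (ne_of_gt hxx)]
  obtain ⟨u, hu, hsub⟩ := mem_nhdsGT_iff_exists_Ioo_subset.mp hev
  set c : ℝ := (x₁ + min u x₂) / 2 with hc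
  have hmin : x₁ < min u x₂ := lt_min hu hlt
  have hc1 : x₁ < c := by simp only [hc]; linarith
  have hc2 : c < min u x₂ := by simp only [hc]; linarith
  have hcu : c < u := hc2.trans_le (min_le_left _ _)
  have hcx₂ : c < x₂ := hc2.trans_le (min_le_right _ _)
  set S : Set ℝ := {x ∈ Icc c x₂ | f x = f x₁} with hS
  have hScl : IsClosed S := by
    have : ContinuousOn f (Icc c x₂) :=
      hcf.mono (Icc_subset_Icc hc1.le le_rfl)
    have h := this.preimage_isClosed_of_isClosed isClosed_Icc (isClosed_singleton (x := f x₁))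
    convert h using 1
    rfl
  have hSsub : S ⊆ Icc c x₂ := fun x hx => hx.1
  have hScomp : IsCompact S := isCompact_Icc.of_isClosed_subset hScl hSsub
  have hSne : S.Nonempty := ⟨x₂, ⟨hcx₂.le, le_rfl⟩, heq.symm⟩
  set x₀ : ℝ := sInf S with hx₀def
  have hx₀S : x₀ ∈ S := hScomp.sInf_mem hSne
  have hx₀c : c ≤ x₀ := hx₀S.1.1
  have hx₀x₂ : x₀ ≤ x₂ := hx₀S.1.2
  have hx₁x₀ : x₁ < x₀ := hc1.trans_le hx₀c
  have hfx₀ : f x₀ = f x₁ := hx₀S.2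
  -- f > f x₁ on (x₁, x₀)
  have habove : ∀ x ∈ Ioo x₁ x₀, f x₁ < f x := by
    have hbase : ∀ x ∈ Ioc x₁ c, f x₁ < f x := by
      intro x hx
      exact hsub ⟨hx.1, lt_of_le_of_lt hx.2 hcu⟩
    intro x ⟨hxa, hxb⟩
    by_cases hxc : x ≤ c
    · exact hbase x ⟨hxa, hxc⟩
    · push_neg at hxc
      have hxx₂ : x ≤ x₂ := (hxb.trans_le hx₀x₂).le
      have hne : f x ≠ f x₁ := by
        intro h
        have : x ∈ S := ⟨⟨hxc.le, hxx₂⟩, h⟩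
        exact absurd (csInf_le hScomp.bddBelow this) (not_le.mpr hxb)
      rcases lt_or_gt_of_ne hne with hlt' | hgt
      · exfalso
        have hcont' : ContinuousOn f (Icc c x) :=
          hcf.mono (Icc_subset_Icc hc1.le hxx₂)
        have hfc : f x₁ < f c := hbase c ⟨hc1, le_rfl⟩
        have : f x₁ ∈ Icc (f x) (f c) := ⟨hlt'.le, hfc.le⟩
        obtain ⟨y, hy, hfy⟩ := intermediate_value_Icc' hxc.le hcont' this
        have hyS : y ∈ S := ⟨⟨hy.1, hy.2.trans hxx₂⟩, hfy⟩
        have : x₀ ≤ y := csInf_le hScomp.bddBelow hyS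
        linarith [hy.2]
      · exact hgt
  -- f' x₀ ≤ 0
  have hx₀Icc : x₀ ∈ Icc x₁ x₂ := ⟨hx₁x₀.le, hx₀x₂⟩
  have hslope0 : Tendsto (slope f x₀) (𝓝[<] x₀) (𝓝 (f' x₀)) :=
    (hasDerivAt_iff_tendsto_slope.mp (hderiv x₀ hx₀Icc)).mono_left
      (nhdsWithin_mono _ (fun x hx => ne_of_lt hx))
  have hevle : ∀ᶠ x in 𝓝[<] x₀, slope f x₀ x ≤ 0 := by
    filter_upwards [Ioo_mem_nhdsLT_of_mem ⟨hx₁x₀, le_rfl⟩] with x hx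
    have h1' : f x₀ < f x := hfx₀ ▸ habove x hx
    have h2' : x - x₀ < 0 := sub_neg.mpr hx.2
    have : (f x - f x₀) / (x - x₀) < 0 :=
      div_neg_of_pos_of_neg (sub_pos.mpr h1') h2'
    simpa [slope_def_field] using this.le
  have hd0 : f' x₀ ≤ 0 := le_of_tendsto hslope0 hevle
  have hx₀lt : x₀ < x₂ := by
    rcases lt_or_eq_of_le hx₀x₂ with h | h
    · exact h
    · exact absurd (h ▸ hd0) (not_le.mpr h2)
  exact ⟨x₀, ⟨hx₁x₀, hx₀lt⟩, hfx₀, hd0⟩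

theorem stmt_2 (f f' : ℝ → ℝ) (a b x₁ x₂ : ℝ)
    (hderiv : ∀ x ∈ Set.Ioo a b, HasDerivAt f (f' x) x)
    (hcont : ContinuousOn f' (Set.Ioo a b))
    (hx₁ : x₁ ∈ Set.Ioo a b) (hx₂ : x₂ ∈ Set.Ioo a b) (hlt : x₁ < x₂)
    (heq : f x₁ = f x₂) (hsign : f' x₁ * f' x₂ > 0) :
    ∃ x₀ ∈ Set.Ioo x₁ x₂, f x₀ = f x₁ ∧ f' x₀ * f' x₁ ≤ 0 := by
  have hsubset : Icc x₁ x₂ ⊆ Ioo a b := Icc_subset_Ioo hx₁.1 hx₂.2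
  have hderiv' : ∀ x ∈ Icc x₁ x₂, HasDerivAt f (f' x) x :=
    fun x hx => hderiv x (hsubset hx)
  rcases mul_pos_iff.mp hsign with ⟨h1, h2⟩ | ⟨h1, h2⟩
  · obtain ⟨x₀, hmem, hfe, hle⟩ := aux2 f f' x₁ x₂ hderiv' hlt heq h1 h2
    exact ⟨x₀, hmem, hfe, mul_nonpos_iff.mpr (Or.inr ⟨hle, h1.le⟩)⟩
  · have hderivn : ∀ x ∈ Icc x₁ x₂, HasDerivAt (fun y => -f y) (-f' x) x :=
      fun x hx => (hderiv' x hx).neg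
    have heqn : -f x₁ = -f x₂ := by rw [heq]
    obtain ⟨x₀, hmem, hfe, hle⟩ := aux2 (fun y => -f y) (fun y => -f' y) x₁ x₂
      hderivn hlt heqn (by simpa using neg_pos.mpr h1) (by simpa using neg_pos.mpr h2)
    refine ⟨x₀, hmem, by simpa using hfe, ?_⟩
    have : 0 ≤ f' x₀ := by simpa using hle
    exact mul_nonpos_iff.mpr (Or.inl ⟨this, h1.le⟩)
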